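/- Let f*: ℝ^d → ℝ be a differentiable convex function and x_0, …, x_d ∈ ℝ^d be d+1 points such that the origin 0 lies in the interior of conv{x_0,…,x_d}. Let g: ℝ^d → ℝ be a differentiable convex function with ∇g(x_i) = ∇f*(x_i) for all i = 0,…,d. Then the pointwise generalization gap of the gradient at the origin is bounded by the diameter of the set of feasible gradients: ‖∇f*(0) − ∇g(0)‖₂ ≤ diam(A), where A = {v ∈ ℝ^d : v · x_i ≤ ∇f*(x_i) · x_i for all i} and diam(A) = sup{‖v − w‖₂ : v, w ∈ A}. -/

import Mathlib

open Metric Set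

variable {E : Type*} [NormedAddCommGroup E] [InnerProductSpace ℝ E] [CompleteSpace E]

/-- Subgradient inequality for differentiable convex functions. -/
lemma grad_subgrad {f : E → ℝ} (hf : ConvexOn ℝ Set.univ f) (hdf : Differentiable ℝ f)
    (y z : E) : (inner ℝ (gradient f y) (z - y) : ℝ) ≤ f z - f y := by
  set φ : ℝ → ℝ := fun t => f (AffineMap.lineMap y z t) with hφ
  have hconv : ConvexOn ℝ Set.univ φ := by
    have := hf.comp_affineMap (AffineMap.lineMap y z)
    exact this
  have hline : HasDerivAt (fun t : ℝ => (AffineMap.lineMap y z t : E)) (z - y) 0 := by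
    simp only [AffineMap.lineMap_apply_module']
    have h1 : HasDerivAt (fun t : ℝ => t • (z - y)) ((1:ℝ) • (z - y)) 0 :=
      (hasDerivAt_id (0:ℝ)).smul_const (z - y)
    simpa using h1.add_const y
  have hfd : HasFDerivAt f (InnerProductSpace.toDual ℝ E (gradient f y)) y := by
    have := (hdf y).hasGradientAt
    rwa [hasGradientAt_iff_hasFDerivAt] at this
  have hφd : HasDerivAt φ ((inner ℝ (gradient f y) (z - y) : ℝ)) 0 := by
    have : HasDerivAt φ (InnerProductSpace.toDual ℝ E (gradient f y) (z - y)) 0 := by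
      have hfd' : HasFDerivAt f (InnerProductSpace.toDual ℝ E (gradient f y))
          ((AffineMap.lineMap y z) (0:ℝ) : E) := by
        have h0 : (AffineMap.lineMap y z (0:ℝ) : E) = y := by simp
        rw [h0]; exact hfd
      exact hfd'.comp_hasDerivAt 0 hline
    simpa using this
  have := hconv.le_slope_of_hasDerivAt (Set.mem_univ (0:ℝ)) (Set.mem_univ 1)
    one_pos hφd
  rw [slope_def_field] at this
  simpa [φ] using this

/-- If `g : ℝ^d → ℝ` is differentiable and convex with
`∇g(x i) = ∇f(x i)` at all sample points `x i` (whose convex hull contains the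
origin in its interior), then the pointwise generalization gap of the gradient at
the origin is bounded by the diameter of the set of feasible gradients:
`‖∇f(0) − ∇g(0)‖ ≤ diam A` with `A = {v | ∀ i, v · x i ≤ ∇f(x i) · x i}`. -/
theorem statement5 (d : ℕ)
    (f : EuclideanSpace ℝ (Fin d) → ℝ)
    (hf : ConvexOn ℝ Set.univ f) (hdf : Differentiable ℝ f)
    (x : Fin (d + 1) → EuclideanSpace ℝ (Fin d))
    (hx : (0 : EuclideanSpace ℝ (Fin d)) ∈ interior (convexHull ℝ (Set.range x)))
    (g : EuclideanSpace ℝ (Fin d) → ℝ)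
    (hg : ConvexOn ℝ Set.univ g) (hdg : Differentiable ℝ g)
    (hint : ∀ i, gradient g (x i) = gradient f (x i)) :
    ‖gradient f 0 - gradient g 0‖ ≤
      Metric.diam {w : EuclideanSpace ℝ (Fin d) |
        ∀ k, (inner ℝ w (x k) : ℝ) ≤ inner ℝ (gradient f (x k)) (x k)} := by
  classical
  set A : Set (EuclideanSpace ℝ (Fin d)) := {w : EuclideanSpace ℝ (Fin d) | ∀ k, (inner ℝ w (x k) : ℝ) ≤ inner ℝ (gradient f (x k)) (x k)} with hA
  -- membership of the two gradients
  have hvA : gradient f 0 ∈ A := by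
    intro k
    have h1 := grad_subgrad hf hdf 0 (x k)
    have h2 := grad_subgrad hf hdf (x k) 0
    simp only [sub_zero, zero_sub, inner_neg_right] at h1 h2
    linarith
  have hwA : gradient g 0 ∈ A := by
    intro k
    have h1 := grad_subgrad hg hdg 0 (x k)
    have h2 := grad_subgrad hg hdg (x k) 0
    simp only [sub_zero, zero_sub, inner_neg_right, hint] at h1 h2
    linarith
  -- A is bounded
  obtain ⟨ε, hε, hball⟩ := Metric.mem_nhds_iff.mp (mem_interior_iff_mem_nhds.mp hx)
  set s : Finset (EuclideanSpace ℝ (Fin d)) := Finset.image x Finset.univ with hsdef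
  have hsne : s.Nonempty := ⟨x 0, Finset.mem_image_of_mem x (Finset.mem_univ 0)⟩
  have hscoe : (↑s : Set (EuclideanSpace ℝ (Fin d))) = Set.range x := by
    simp [hsdef, Finset.coe_image]
  set c : EuclideanSpace ℝ (Fin d) → ℝ := fun y => inner ℝ (gradient f y) y with hc
  set C : ℝ := s.sup' hsne c with hC
  have hsub : A ⊆ Metric.closedBall 0 (2 * |C| / ε) := by
    intro v hv
    rw [Metric.mem_closedBall, dist_zero_right]
    rcases eq_or_ne v 0 with rfl | hv0
    · simp; positivity
    · have hnv : (0:ℝ) < ‖v‖ := norm_pos_iff.mpr hv0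
      set u : EuclideanSpace ℝ (Fin d) := (ε / (2 * ‖v‖)) • v with hu
      have hun : ‖u‖ = ε / 2 := by
        rw [hu, norm_smul, Real.norm_eq_abs, abs_of_pos (by positivity)]
        field_simp
      have humem : u ∈ convexHull ℝ (Set.range x) := by
        apply hball
        rw [Metric.mem_ball, dist_zero_right, hun]
        linarith
      rw [← hscoe, Finset.convexHull_eq] at humem
      obtain ⟨w, hw0, hw1, hwc⟩ := humem
      have hcm : u = ∑ y ∈ s, w y • y := by
        rw [← hwc, Finset.centerMass_eq_of_sum_1 _ _ hw1]
        simp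
      have hinner : (inner ℝ v u : ℝ) = ε / (2 * ‖v‖) * (‖v‖ ^ 2) := by
        rw [hu, real_inner_smul_right, real_inner_self_eq_norm_sq]
      have hbound : (inner ℝ v u : ℝ) ≤ |C| := by
        rw [hcm, inner_sum]
        have : ∀ y ∈ s, (inner ℝ v (w y • y) : ℝ) ≤ w y * |C| := by
          intro y hy
          obtain ⟨i, rfl⟩ : ∃ a, x a = y := by simpa [hsdef] using hy
          rw [real_inner_smul_right]
          have h1 : (inner ℝ v (x i) : ℝ) ≤ c (x i) := hv i
          have h2 : c (x i) ≤ C := Finset.le_sup' c hy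
          exact mul_le_mul_of_nonneg_left (h1.trans (h2.trans (le_abs_self C))) (hw0 _ hy)
        calc ∑ y ∈ s, (inner ℝ v (w y • y) : ℝ) ≤ ∑ y ∈ s, w y * |C| :=
              Finset.sum_le_sum this
          _ = |C| := by rw [← Finset.sum_mul, hw1, one_mul]
      rw [hinner] at hbound
      have heq : ε / (2 * ‖v‖) * ‖v‖ ^ 2 = ε * ‖v‖ / 2 := by
        field_simp
      rw [heq] at hbound
      rw [le_div_iff₀ hε]
      nlinarith
  have hbdd : Bornology.IsBounded A := Metric.isBounded_closedBall.subset hsub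
  calc ‖gradient f 0 - gradient g 0‖ = dist (gradient f 0) (gradient g 0) :=
        (dist_eq_norm _ _).symm
    _ ≤ Metric.diam A := Metric.dist_le_diam_of_mem hbdd hvA hwA
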